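/- Let k > 0, λ ∈ ℂ, and let (x', y') ∈ ℝ² have polar coordinates (ρ', θ'). Then the series ∑_{p∈ℤ} J_p(kρ') e^{ipθ'} (−i w_k(λ))^p converges absolutely and its sum equals exp(−s_k(λ) y' − iλ x'). -/

import Mathlib

open MeasureTheory

/-- The branch of the complex square root with `θ ∈ [−π, π)`: it agrees with the
principal square root except on the negative real axis, where `sqrtP (−r) = −i √r`. -/
noncomputable def sqrtP (z : ℂ) : ℂ :=
  if z.im = 0 ∧ z.re < 0 then -(z ^ (1/2 : ℂ)) else z ^ (1/2 : ℂ)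

/-- `s_k(λ) = sqrtP (λ² − k²)`. -/
noncomputable def sK (k : ℝ) (l : ℂ) : ℂ := sqrtP (l ^ 2 - (k : ℂ) ^ 2)

/-- `w_k(λ) = (λ − s_k(λ))/k`. -/
noncomputable def wK (k : ℝ) (l : ℂ) : ℂ := (l - sK k l) / (k : ℂ)

/-- Bessel function of the first kind of nonnegative integer order `p`. -/
noncomputable def besselJnat (p : ℕ) (z : ℂ) : ℂ :=
  ∑' n : ℕ, ((-1 : ℂ) ^ n / ((n.factorial : ℂ) * ((n + p).factorial : ℂ))) * (z / 2) ^ (2 * n + p)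

/-- Bessel function of the first kind of integer order `p`. -/
noncomputable def besselJ (p : ℤ) (z : ℂ) : ℂ :=
  if 0 ≤ p then besselJnat p.toNat z else (-1 : ℂ) ^ p.natAbs * besselJnat p.natAbs z

lemma sqrtP_sq (z : ℂ) : sqrtP z ^ 2 = z := by
  have h : (z ^ (1/2 : ℂ)) ^ 2 = z := by
    rcases eq_or_ne z 0 with rfl | hz
    · rw [Complex.zero_cpow (by norm_num : (1/2 : ℂ) ≠ 0)]; ring
    · rw [sq, ← Complex.cpow_add _ _ hz]; norm_num
  unfold sqrtP; split <;> simpa [neg_sq] using h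

/-- Reindexing `ℤ × ℕ ≃ ℕ × ℕ` collecting pairs `(m, n)` by `p = m - n`. -/
def pairEquiv : ℤ × ℕ ≃ ℕ × ℕ where
  toFun pn := (pn.2 + pn.1.toNat, pn.2 + (-pn.1).toNat)
  invFun mn := ((mn.1 : ℤ) - (mn.2 : ℤ), min mn.1 mn.2)
  left_inv := by rintro ⟨p, n⟩; ext <;> simp <;> omega
  right_inv := by rintro ⟨m, n⟩; ext <;> simp <;> omega

/-- The Cauchy-product double series for `exp(zt/2)·exp(−z/(2t))`. -/
noncomputable def Fgen (z t : ℂ) : ℕ × ℕ → ℂ := fun mn =>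
  ((z * t / 2) ^ mn.1 / mn.1.factorial) * ((-z / (2 * t)) ^ mn.2 / mn.2.factorial)

set_option maxHeartbeats 1000000 in
/-- Generating-function (Laurent) expansion for the Bessel functions. -/
lemma besselJ_generating (z t : ℂ) (ht0 : t ≠ 0) :
    Summable (fun p : ℤ => ‖besselJ p z * t ^ p‖) ∧
    HasSum (fun p : ℤ => besselJ p z * t ^ p)
      (Complex.exp (z * t / 2) * Complex.exp (-z / (2 * t))) := by
  have hA : HasSum (fun m : ℕ => (z * t / 2) ^ m / m.factorial) (Complex.exp (z * t / 2)) := by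
    rw [Complex.exp_eq_exp_ℂ]; exact NormedSpace.expSeries_div_hasSum_exp _
  have hB : HasSum (fun n : ℕ => (-z / (2 * t)) ^ n / n.factorial)
      (Complex.exp (-z / (2 * t))) := by
    rw [Complex.exp_eq_exp_ℂ]; exact NormedSpace.expSeries_div_hasSum_exp _
  have hAn : Summable (fun m : ℕ => ‖(z * t / 2) ^ m / (m.factorial : ℂ)‖) :=
    (Real.summable_pow_div_factorial ‖z * t / 2‖).congr fun n => by
      simp [norm_div, norm_pow]
  have hBn : Summable (fun n : ℕ => ‖(-z / (2 * t)) ^ n / (n.factorial : ℂ)‖) :=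
    (Real.summable_pow_div_factorial ‖-z / (2 * t)‖).congr fun n => by
      simp [norm_div, norm_pow]
  have hFn : Summable (fun mn : ℕ × ℕ => ‖Fgen z t mn‖) := by
    unfold Fgen
    exact Summable.mul_norm (R := ℂ) (f := fun m : ℕ => (z * t / 2) ^ m / (m.factorial : ℂ))
      (g := fun n : ℕ => (-z / (2 * t)) ^ n / (n.factorial : ℂ)) hAn hBn
  have hF : HasSum (Fgen z t) (Complex.exp (z * t / 2) * Complex.exp (-z / (2 * t))) := by
    unfold Fgen
    have hFn' := hFn
    unfold Fgen at hFn'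
    have h0 := HasSum.mul hA hB (by exact hFn'.of_norm)
    exact h0
  have hG : HasSum (fun pn : ℤ × ℕ => Fgen z t (pairEquiv pn))
      (Complex.exp (z * t / 2) * Complex.exp (-z / (2 * t))) :=
    (pairEquiv.hasSum_iff).2 hF
  have hGn : Summable (fun pn : ℤ × ℕ => ‖Fgen z t (pairEquiv pn)‖) :=
    (pairEquiv.summable_iff).2 hFn
  have hnorm_fib : ∀ p : ℤ, Summable (fun n => ‖Fgen z t (pairEquiv (p, n))‖) := fun p =>
    hGn.prod_factor p
  have hsum_fib : ∀ p : ℤ, Summable (fun n => Fgen z t (pairEquiv (p, n))) := fun p =>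
    (hnorm_fib p).of_norm
  have hfib : ∀ p : ℤ, HasSum (fun n => Fgen z t (pairEquiv (p, n))) (besselJ p z * t ^ p) := by
    intro p
    rcases le_or_gt 0 p with hp | hp
    · set q := p.toNat with hqdef
      have hq : (q : ℤ) = p := Int.toNat_of_nonneg hp
      have hpe : ∀ n : ℕ, pairEquiv (p, n) = (n + q, n) := by
        intro n
        unfold pairEquiv
        ext <;> simp <;> omega
      have heq : ∀ n : ℕ, Fgen z t (pairEquiv (p, n)) =
          t ^ p * (((-1 : ℂ) ^ n / ((n.factorial : ℂ) * ((n + q).factorial : ℂ))) *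
            (z / 2) ^ (2 * n + q)) := by
        intro n
        rw [hpe n, ← hq, zpow_natCast]
        unfold Fgen
        have h1 : ((n.factorial : ℂ)) ≠ 0 := Nat.cast_ne_zero.2 n.factorial_ne_zero
        have h2 : (((n + q).factorial : ℂ)) ≠ 0 := Nat.cast_ne_zero.2 (n + q).factorial_ne_zero
        rw [show -z / (2 * t) = -1 * (z / (2 * t)) by ring, mul_pow]
        simp only [div_pow, mul_pow]
        field_simp
        ring
      have hsumc : Summable (fun n : ℕ =>
          ((-1 : ℂ) ^ n / ((n.factorial : ℂ) * ((n + q).factorial : ℂ))) *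
            (z / 2) ^ (2 * n + q)) := by
        refine (summable_mul_left_iff (zpow_ne_zero p ht0)).1 ?_
        exact (hsum_fib p).congr fun n => (heq n)
      have hc : HasSum (fun n : ℕ =>
          ((-1 : ℂ) ^ n / ((n.factorial : ℂ) * ((n + q).factorial : ℂ))) *
            (z / 2) ^ (2 * n + q)) (besselJnat q z) := by
        rw [besselJnat]; exact hsumc.hasSum
      have hbj : besselJ p z = besselJnat q z := by rw [besselJ, if_pos hp]
      have := hc.mul_left (t ^ p)
      rw [hbj, mul_comm (besselJnat q z) (t ^ p)]
      exact HasSum.congr_fun this fun n => heq n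
    · set q := p.natAbs with hqdef
      have hq : p = -(q : ℤ) := by omega
      have hpe : ∀ n : ℕ, pairEquiv (p, n) = (n, n + q) := by
        intro n
        unfold pairEquiv
        ext <;> simp <;> omega
      have heq : ∀ n : ℕ, Fgen z t (pairEquiv (p, n)) =
          ((t ^ q)⁻¹ * (-1 : ℂ) ^ q) * (((-1 : ℂ) ^ n / ((n.factorial : ℂ) *
            ((n + q).factorial : ℂ))) * (z / 2) ^ (2 * n + q)) := by
        intro n
        rw [hpe n]
        unfold Fgen
        have h1 : ((n.factorial : ℂ)) ≠ 0 := Nat.cast_ne_zero.2 n.factorial_ne_zero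
        have h2 : (((n + q).factorial : ℂ)) ≠ 0 := Nat.cast_ne_zero.2 (n + q).factorial_ne_zero
        rw [show -z / (2 * t) = -1 * (z / (2 * t)) by ring, mul_pow]
        simp only [div_pow, mul_pow]
        field_simp
        ring
      have hsumc : Summable (fun n : ℕ =>
          ((-1 : ℂ) ^ n / ((n.factorial : ℂ) * ((n + q).factorial : ℂ))) *
            (z / 2) ^ (2 * n + q)) := by
        have hA0 : ((t ^ q)⁻¹ * (-1 : ℂ) ^ q) ≠ 0 :=
          mul_ne_zero (inv_ne_zero (pow_ne_zero q ht0)) (pow_ne_zero q (by norm_num))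
        refine (summable_mul_left_iff hA0).1 ?_
        exact (hsum_fib p).congr fun n => (heq n)
      have hc : HasSum (fun n : ℕ =>
          ((-1 : ℂ) ^ n / ((n.factorial : ℂ) * ((n + q).factorial : ℂ))) *
            (z / 2) ^ (2 * n + q)) (besselJnat q z) := by
        rw [besselJnat]; exact hsumc.hasSum
      have hbj : besselJ p z = (-1 : ℂ) ^ q * besselJnat q z := by
        rw [besselJ, if_neg (by omega)]
      have hmain := hc.mul_left ((t ^ q)⁻¹ * (-1 : ℂ) ^ q)
      have hval : ((t ^ q)⁻¹ * (-1 : ℂ) ^ q) * besselJnat q z = besselJ p z * t ^ p := by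
        rw [hbj, hq, zpow_neg, zpow_natCast]; ring
      rw [← hval]
      exact HasSum.congr_fun hmain fun n => heq n
  constructor
  · have hsig : Summable (fun x : Σ _ : ℤ, ℕ => ‖Fgen z t (pairEquiv (x.1, x.2))‖) :=
      ((Equiv.sigmaEquivProd ℤ ℕ).summable_iff).2 hGn
    have hsn : Summable (fun p : ℤ => ∑' n : ℕ, ‖Fgen z t (pairEquiv (p, n))‖) :=
      hsig.sigma' fun p => hnorm_fib p
    refine Summable.of_nonneg_of_le (fun p => norm_nonneg _) (fun p => ?_) hsn
    calc ‖besselJ p z * t ^ p‖ = ‖∑' n : ℕ, Fgen z t (pairEquiv (p, n))‖ := by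
          rw [(hfib p).tsum_eq]
      _ ≤ ∑' n : ℕ, ‖Fgen z t (pairEquiv (p, n))‖ := norm_tsum_le_tsum_norm (hnorm_fib p)
  · exact hG.prod_fiberwise hfib

set_option maxHeartbeats 1000000 in
/-- For `k > 0`, `λ ∈ ℂ` and `(x', y')` with polar coordinates `(ρ', θ')`, the series
`∑_{p∈ℤ} J_p(kρ') e^{ipθ'} (−i w_k(λ))^p` converges absolutely with sum
`exp(−s_k(λ) y' − iλ x')`. -/
theorem besselType_pointwise_expansion (k : ℝ) (hk : 0 < k) (lam : ℂ)
    (x' y' ρ' θ' : ℝ) (hρ' : 0 ≤ ρ')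
    (hx' : x' = ρ' * Real.cos θ') (hy' : y' = ρ' * Real.sin θ') :
    Summable (fun p : ℤ =>
      ‖besselJ p ((k * ρ' : ℝ) : ℂ) * Complex.exp (Complex.I * (p : ℂ) * (θ' : ℂ)) *
        (-Complex.I * wK k lam) ^ p‖) ∧
    HasSum (fun p : ℤ =>
      besselJ p ((k * ρ' : ℝ) : ℂ) * Complex.exp (Complex.I * (p : ℂ) * (θ' : ℂ)) *
        (-Complex.I * wK k lam) ^ p)
      (Complex.exp (-(sK k lam) * (y' : ℂ) - Complex.I * lam * (x' : ℂ))) := by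
  have hk0 : (k : ℂ) ≠ 0 := by exact_mod_cast hk.ne'
  have hs2 : (sK k lam) ^ 2 = lam ^ 2 - (k : ℂ) ^ 2 := sqrtP_sq _
  have hw1 : (k : ℂ) * wK k lam = lam - sK k lam := by
    rw [wK]; field_simp
  have hfac : (lam - sK k lam) * (lam + sK k lam) = (k : ℂ) ^ 2 := by linear_combination -hs2
  have hls : lam - sK k lam ≠ 0 := by
    intro h
    rw [h, zero_mul] at hfac
    exact pow_ne_zero 2 hk0 hfac.symm
  have hw0 : wK k lam ≠ 0 := by
    rw [wK]; exact div_ne_zero hls hk0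
  have hw2 : wK k lam * (lam + sK k lam) = (k : ℂ) := by
    have h : (k : ℂ) * (wK k lam * (lam + sK k lam)) = (k : ℂ) * (k : ℂ) := by
      linear_combination (lam + sK k lam) * hw1 + hfac
    exact mul_left_cancel₀ hk0 h
  have ht0 : Complex.exp (Complex.I * (θ' : ℂ)) * (-Complex.I * wK k lam) ≠ 0 :=
    mul_ne_zero (Complex.exp_ne_zero _)
      (mul_ne_zero (neg_ne_zero.2 Complex.I_ne_zero) hw0)
  obtain ⟨hsum, hhs⟩ := besselJ_generating ((k * ρ' : ℝ) : ℂ)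
    (Complex.exp (Complex.I * (θ' : ℂ)) * (-Complex.I * wK k lam)) ht0
  have hterm : ∀ p : ℤ,
      besselJ p ((k * ρ' : ℝ) : ℂ) * Complex.exp (Complex.I * (p : ℂ) * (θ' : ℂ)) *
        (-Complex.I * wK k lam) ^ p =
      besselJ p ((k * ρ' : ℝ) : ℂ) *
        (Complex.exp (Complex.I * (θ' : ℂ)) * (-Complex.I * wK k lam)) ^ p := by
    intro p
    have h1 : Complex.exp (Complex.I * (p : ℂ) * (θ' : ℂ)) =
        Complex.exp (Complex.I * (θ' : ℂ)) ^ p := by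
      rw [← Complex.exp_int_mul]
      ring_nf
    rw [h1, mul_zpow (Complex.exp (Complex.I * (θ' : ℂ))) (-Complex.I * wK k lam) p,
      mul_assoc]
  -- the exponent identity
  have hexpc : Complex.exp (Complex.I * (θ' : ℂ)) =
      Complex.cos (θ' : ℂ) + Complex.sin (θ' : ℂ) * Complex.I := by
    rw [mul_comm Complex.I ((θ' : ℂ)), Complex.exp_mul_I]
  have h1 : Complex.cos (θ' : ℂ) ^ 2 + Complex.sin (θ' : ℂ) ^ 2 = 1 :=
    Complex.cos_sq_add_sin_sq _
  have hxc : ((x' : ℝ) : ℂ) = (ρ' : ℂ) * Complex.cos (θ' : ℂ) := by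
    rw [hx']; push_cast [Complex.ofReal_cos]; ring
  have hyc : ((y' : ℝ) : ℂ) = (ρ' : ℂ) * Complex.sin (θ' : ℂ) := by
    rw [hy']; push_cast [Complex.ofReal_sin]; ring
  have hz : ((k * ρ' : ℝ) : ℂ) = (k : ℂ) * (ρ' : ℂ) := by push_cast; ring
  set c : ℂ := Complex.cos (θ' : ℂ) with hcdef
  set d : ℂ := Complex.sin (θ' : ℂ) with hddef
  set s : ℂ := sK k lam with hsdef
  set w : ℂ := wK k lam with hwdef
  have key : ((k * ρ' : ℝ) : ℂ) * (Complex.exp (Complex.I * (θ' : ℂ)) * (-Complex.I * w)) ^ 2 -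
      ((k * ρ' : ℝ) : ℂ) =
      (-s * (y' : ℂ) - Complex.I * lam * (x' : ℂ)) *
        (2 * (Complex.exp (Complex.I * (θ' : ℂ)) * (-Complex.I * w))) := by
    rw [hz, hxc, hyc, hexpc]
    linear_combination ((ρ' : ℂ) * w * (lam + s)) * h1 +
      ((ρ' : ℂ) * w * (d ^ 2 - c ^ 2 - 2 * Complex.I * c * d)) * hw1 +
      (ρ' : ℂ) * hw2 +
      (-2 * (ρ' : ℂ) * d ^ 2 * w * s - 2 * (ρ' : ℂ) * c * d * w * lam * Complex.I -
        2 * (ρ' : ℂ) * c ^ 2 * w * lam - (k : ℂ) * (ρ' : ℂ) * d ^ 2 * w ^ 2 +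
        (k : ℂ) * (ρ' : ℂ) * d ^ 2 * w ^ 2 * Complex.I ^ 2 +
        2 * (k : ℂ) * (ρ' : ℂ) * c * d * w ^ 2 * Complex.I +
        (k : ℂ) * (ρ' : ℂ) * c ^ 2 * w ^ 2) * Complex.I_sq
  have hexpo : ((k * ρ' : ℝ) : ℂ) * (Complex.exp (Complex.I * (θ' : ℂ)) * (-Complex.I * w)) / 2 +
      -((k * ρ' : ℝ) : ℂ) / (2 * (Complex.exp (Complex.I * (θ' : ℂ)) * (-Complex.I * w))) =
      -s * (y' : ℂ) - Complex.I * lam * (x' : ℂ) := by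
    have h2t : (2 : ℂ) * (Complex.exp (Complex.I * (θ' : ℂ)) * (-Complex.I * w)) ≠ 0 :=
      mul_ne_zero two_ne_zero ht0
    rw [div_add_div _ _ two_ne_zero h2t, div_eq_iff (mul_ne_zero two_ne_zero h2t)]
    linear_combination 2 * key
  have hvalue : Complex.exp (((k * ρ' : ℝ) : ℂ) *
        (Complex.exp (Complex.I * (θ' : ℂ)) * (-Complex.I * w)) / 2) *
      Complex.exp (-((k * ρ' : ℝ) : ℂ) /
        (2 * (Complex.exp (Complex.I * (θ' : ℂ)) * (-Complex.I * w)))) =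
      Complex.exp (-s * (y' : ℂ) - Complex.I * lam * (x' : ℂ)) := by
    rw [← Complex.exp_add, hexpo]
  constructor
  · exact hsum.congr fun p => (congrArg norm (hterm p)).symm
  · rw [← hvalue]
    exact HasSum.congr_fun hhs fun p => hterm p
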